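/- Let a, a^(1), ..., a^(m) be vectors in ℝ^n. The following are equivalent: (1) for every x ∈ ℝ^n with all coordinates nonnegative, ⟨a, x⟩ ≥ min_i ⟨a^(i), x⟩; (2) there exist nonnegative reals λ_1,...,λ_m with λ_1 + ... + λ_m = 1 and a ≥ ∑_i λ_i a^(i) (componentwise inequality). -/

import Mathlib

/-- Farkas-type lemma: `⟨a,x⟩ ≥ min_i ⟨aᶦ,x⟩` for all nonnegative `x` iff
`a` dominates some convex combination of the `aᶦ`. -/
theorem stmt7 (n m : ℕ) (hm : 0 < m) (a : Fin n → ℝ) (A : Fin m → Fin n → ℝ) :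
    (∀ x : Fin n → ℝ, (∀ j, 0 ≤ x j) →
      Finset.univ.inf' ⟨(⟨0, hm⟩ : Fin m), Finset.mem_univ _⟩
        (fun i => ∑ j, A i j * x j) ≤ ∑ j, a j * x j) ↔
    ∃ lam : Fin m → ℝ, (∀ i, 0 ≤ lam i) ∧ (∑ i, lam i = 1) ∧
      ∀ j, ∑ i, lam i * A i j ≤ a j := by
  classical
  constructor
  · intro h
    by_contra hc
    push_neg at hc
    -- hc : ∀ lam, (∀ i, 0 ≤ lam i) → ∑ i, lam i = 1 → ∃ j, a j < ∑ i, lam i * A i j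
    let L : (Fin m → ℝ) →ₗ[ℝ] EuclideanSpace ℝ (Fin n) :=
      { toFun := fun lam => WithLp.toLp 2 (fun j => ∑ i, lam i * A i j : Fin n → ℝ)
        map_add' := by
          intro u v; ext j
          simp [add_mul, Finset.sum_add_distrib]
        map_smul' := by
          intro c u; ext j
          simp [Finset.mul_sum, mul_assoc] }
    have hLapp : ∀ (lam : Fin m → ℝ) (j : Fin n), L lam j = ∑ i, lam i * A i j :=
      fun _ _ => rfl
    set K : Set (EuclideanSpace ℝ (Fin n)) := L '' stdSimplex ℝ (Fin m) with hK
    set D : Set (EuclideanSpace ℝ (Fin n)) := {y | ∀ j, y j ≤ a j} with hD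
    have hKc : IsCompact K := (isCompact_stdSimplex ℝ _).image L.continuous_of_finiteDimensional
    have hKconv : Convex ℝ K := (convex_stdSimplex ℝ _).linear_image L
    have hDc : IsClosed D := by
      have hset : D = ⋂ j, {y : EuclideanSpace ℝ (Fin n) | y j ≤ a j} := by
        ext y; simp [hD, Set.mem_iInter]
      rw [hset]
      exact isClosed_iInter fun j =>
        isClosed_le ((EuclideanSpace.proj j : EuclideanSpace ℝ (Fin n) →L[ℝ] ℝ).continuous)
          continuous_const
    have hDconv : Convex ℝ D := by
      intro y hy z hz s t hs ht hst
      intro j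
      have : (s • y + t • z) j = s * y j + t * z j := rfl
      rw [this]
      calc s * y j + t * z j ≤ s * a j + t * a j := by
            exact add_le_add (mul_le_mul_of_nonneg_left (hy j) hs)
              (mul_le_mul_of_nonneg_left (hz j) ht)
        _ = a j := by rw [← add_mul, hst, one_mul]
    have hdisj : Disjoint K D := by
      rw [Set.disjoint_left]
      rintro y ⟨lam, hlam, rfl⟩ hyD
      obtain ⟨j, hj⟩ := hc lam hlam.1 hlam.2
      exact absurd (hyD j) (not_le.2 (by rw [hLapp]; exact hj))
    obtain ⟨f, u, v, hfK, huv, hfD⟩ :=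
      geometric_hahn_banach_compact_closed hKconv hKc hDconv hDc hdisj
    -- the basis vectors
    let a' : EuclideanSpace ℝ (Fin n) := WithLp.toLp 2 a
    let e : Fin n → EuclideanSpace ℝ (Fin n) := fun j => WithLp.toLp 2 (fun k => if j = k then 1 else 0)
    let x : Fin n → ℝ := fun j => -(f (e j))
    have hf : ∀ y : EuclideanSpace ℝ (Fin n), f y = ∑ j, y j * f (e j) := by
      intro y
      have hy : y = ∑ j, y j • e j := by
        ext k
        have : (∑ j, y j • e j) k = ∑ j, y j * (if j = k then 1 else 0) := by
          simp [e]
        rw [this]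
        simp
      conv_lhs => rw [hy]
      rw [map_sum]
      simp [smul_eq_mul]
    have ha' : a' ∈ D := fun j => le_refl _
    have hfa : v < f a' := hfD _ ha'
    have hx : ∀ j, 0 ≤ x j := by
      intro j
      by_contra hneg
      push_neg at hneg
      have hfe : 0 < f (e j) := by simpa [x] using hneg
      have key : ∀ t : ℝ, 0 ≤ t → v < f a' - t * f (e j) := by
        intro t ht
        have hmem : (a' - t • e j) ∈ D := by
          intro k
          have : (a' - t • e j) k
              = a k - t * (if j = k then 1 else 0) := rfl
          rw [this]
          by_cases hk : j = k
          · simp [hk]; nlinarith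
          · simp [hk]
        have := hfD _ hmem
        rwa [map_sub, map_smul, smul_eq_mul] at this
      have := key ((f a' - v) / f (e j))
        (div_nonneg (by linarith) hfe.le)
      rw [div_mul_cancel₀ _ (ne_of_gt hfe)] at this
      linarith
    have hsum : ∀ y : EuclideanSpace ℝ (Fin n), ∑ j, y j * x j = -(f y) := by
      intro y
      rw [hf y]
      rw [← Finset.sum_neg_distrib]
      exact Finset.sum_congr rfl fun j _ => by simp [x, mul_comm]
    have hmain := h x hx
    have hAx : ∀ i : Fin m, -u < ∑ j, A i j * x j := by
      intro i
      have hmem : (WithLp.toLp 2 (A i) : EuclideanSpace ℝ (Fin n)) ∈ K := by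
        refine ⟨Pi.single i 1, ⟨fun k => ?_, by simp⟩, ?_⟩
        · by_cases hk : k = i <;> simp [Pi.single_apply, hk]
        · ext j
          rw [hLapp]
          simp [Pi.single_apply]
      have hfu := hfK _ hmem
      have := hsum (WithLp.toLp 2 (A i) : EuclideanSpace ℝ (Fin n))
      linarith
    have hax : ∑ j, a j * x j = -(f a') :=
      hsum a'
    have hinf : -u ≤ Finset.univ.inf' ⟨(⟨0, hm⟩ : Fin m), Finset.mem_univ _⟩
        (fun i => ∑ j, A i j * x j) :=
      Finset.le_inf' _ _ fun i _ => (hAx i).le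
    linarith
  · rintro ⟨lam, h0, h1, h2⟩ x hx
    set M := Finset.univ.inf' ⟨(⟨0, hm⟩ : Fin m), Finset.mem_univ _⟩
      (fun i => ∑ j, A i j * x j) with hM
    have hS : ∀ i : Fin m, M ≤ ∑ j, A i j * x j := fun i =>
      Finset.inf'_le _ (Finset.mem_univ i)
    calc M = ∑ i, lam i * M := by rw [← Finset.sum_mul, h1, one_mul]
      _ ≤ ∑ i, lam i * (∑ j, A i j * x j) :=
          Finset.sum_le_sum fun i _ => mul_le_mul_of_nonneg_left (hS i) (h0 i)
      _ = ∑ j, (∑ i, lam i * A i j) * x j := by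
          simp_rw [Finset.mul_sum]
          rw [Finset.sum_comm]
          simp_rw [Finset.sum_mul, mul_assoc]
      _ ≤ ∑ j, a j * x j :=
          Finset.sum_le_sum fun j _ => mul_le_mul_of_nonneg_right (h2 j) (hx j)
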